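/- arXiv:2411.09142 — 2 statements merged into one kernel-verified Lean document; each statement's English description precedes it below -/
import Mathlib

section
/- Let 0 < λ ≤ 1 and let P_IN and Q be probability measures on Ω, and set P := λ·P_IN + (1−λ)·Q (the output distribution under Poisson subsampling with rate λ). Then for every ε ∈ ℝ: if ε > log(1−λ), then δ_{P|Q}(ε) = λ · δ_{P_IN|Q}( log(1 + (e^ε − 1)/λ) ); and if ε ≤ log(1−λ), then δ_{P|Q}(ε) = 1 − e^ε. -/
open MeasureTheory

/-- The privacy profile `δ_{P|Q}(ε) := sup { P(S) − e^ε · Q(S) : S measurable }`. -/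
noncomputable def privProfile {Ω : Type*} [MeasurableSpace Ω]
    (P Q : Measure Ω) (ε : ℝ) : ℝ :=
  ⨆ S : {S : Set Ω // MeasurableSet S}, ((P S.1).toReal - Real.exp ε * (Q S.1).toReal)

theorem poisson_subsampling {Ω : Type*} [MeasurableSpace Ω]
    (lam : ℝ) (hlam0 : 0 < lam) (hlam1 : lam ≤ 1)
    (PIN Q : Measure Ω) [IsProbabilityMeasure PIN] [IsProbabilityMeasure Q] (ε : ℝ) :
    privProfile (ENNReal.ofReal lam • PIN + ENNReal.ofReal (1 - lam) • Q) Q ε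
      = if 1 - lam < Real.exp ε
        then lam * privProfile PIN Q (Real.log (1 + (Real.exp ε - 1) / lam))
        else 1 - Real.exp ε := by
  have hlam0' : (0:ℝ) ≤ lam := hlam0.le
  have hlam1' : (0:ℝ) ≤ 1 - lam := by linarith
  have hμ : ∀ S : Set Ω, (((ENNReal.ofReal lam • PIN + ENNReal.ofReal (1 - lam) • Q)) S).toReal
      = lam * (PIN S).toReal + (1 - lam) * (Q S).toReal := by
    intro S
    have h1 : ENNReal.ofReal lam * PIN S ≠ ⊤ := by
      exact ENNReal.mul_ne_top ENNReal.ofReal_ne_top (measure_ne_top _ _)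
    have h2 : ENNReal.ofReal (1 - lam) * Q S ≠ ⊤ := by
      exact ENNReal.mul_ne_top ENNReal.ofReal_ne_top (measure_ne_top _ _)
    simp only [Measure.add_apply, Measure.smul_apply, smul_eq_mul]
    rw [ENNReal.toReal_add h1 h2, ENNReal.toReal_mul, ENNReal.toReal_mul,
      ENNReal.toReal_ofReal hlam0', ENNReal.toReal_ofReal hlam1']
  have hPIN : ∀ S : Set Ω, (PIN S).toReal ≤ 1 := by
    intro S
    have := measure_mono (Set.subset_univ S) (μ := PIN)
    rw [measure_univ] at this
    simpa using ENNReal.toReal_mono (by simp) this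
  have hQ : ∀ S : Set Ω, (Q S).toReal ≤ 1 := by
    intro S
    have := measure_mono (Set.subset_univ S) (μ := Q)
    rw [measure_univ] at this
    simpa using ENNReal.toReal_mono (by simp) this
  have hQ0 : ∀ S : Set Ω, 0 ≤ (Q S).toReal := fun S => ENNReal.toReal_nonneg
  have hPIN0 : ∀ S : Set Ω, 0 ≤ (PIN S).toReal := fun S => ENNReal.toReal_nonneg
  by_cases h : 1 - lam < Real.exp ε
  · rw [if_pos h]
    set ε' := Real.log (1 + (Real.exp ε - 1) / lam) with hε'
    have hpos : 0 < 1 + (Real.exp ε - 1) / lam := by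
      rw [show (1:ℝ) + (Real.exp ε - 1) / lam = (lam + (Real.exp ε - 1)) / lam by field_simp]
      exact div_pos (by linarith) hlam0
    have hE : Real.exp ε' = 1 + (Real.exp ε - 1) / lam := Real.exp_log hpos
    unfold privProfile
    rw [Real.mul_iSup_of_nonneg hlam0']
    congr 1
    funext S
    rw [hμ, hE]
    field_simp
    ring
  · rw [if_neg h]
    push_neg at h
    unfold privProfile
    apply le_antisymm
    · apply ciSup_le
      intro S
      rw [hμ]
      nlinarith [hPIN S.1, hQ S.1, hQ0 S.1, hPIN0 S.1, Real.exp_pos ε]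
    · have hb : BddAbove (Set.range fun S : {S : Set Ω // MeasurableSet S} =>
          (((ENNReal.ofReal lam • PIN + ENNReal.ofReal (1 - lam) • Q)) S.1).toReal
            - Real.exp ε * (Q S.1).toReal) := by
        refine ⟨1, ?_⟩
        rintro x ⟨S, rfl⟩
        dsimp only
        rw [hμ]
        nlinarith [hPIN S.1, hQ S.1, hQ0 S.1, hPIN0 S.1, Real.exp_pos ε]
      refine le_trans ?_ (le_ciSup hb ⟨Set.univ, MeasurableSet.univ⟩)
      rw [hμ]
      simp [measure_univ]
end

section
/- Fix ε ≥ 0. If probability measures P and Q satisfy pure ε-differential privacy in both directions, i.e. δ_{P|Q}(ε) = 0 and δ_{Q|P}(ε) = 0, then for every real q > 1, R_q(P‖Q) ≤ (1/(q−1)) · log( (e^ε/(e^ε+1)) · e^{−qε} + (1/(e^ε+1)) · e^{qε} ); equivalently, E_q(P‖Q) ≤ (e^{(1−q)ε} + e^{qε})/(e^ε + 1). -/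
open MeasureTheory

lemma ae_le_of_profile {Ω : Type*} [MeasurableSpace Ω]
    (μ : Measure Ω) [SigmaFinite μ]
    (P Q : Measure Ω) [IsProbabilityMeasure P] [IsProbabilityMeasure Q]
    (f g : Ω → ℝ) (hf : Measurable f) (hg : Measurable g) (hg0 : 0 ≤ g)
    (hP : P = μ.withDensity (fun θ => ENNReal.ofReal (f θ)))
    (hQ : Q = μ.withDensity (fun θ => ENNReal.ofReal (g θ)))
    (ε : ℝ) (h : privProfile P Q ε = 0) :
    ∀ᵐ θ ∂μ, f θ ≤ Real.exp ε * g θ := by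
  have key : ∀ S : Set Ω, MeasurableSet S →
      (P S).toReal ≤ Real.exp ε * (Q S).toReal := by
    intro S hS
    have hb : BddAbove (Set.range fun S : {S : Set Ω // MeasurableSet S} =>
        ((P S.1).toReal - Real.exp ε * (Q S.1).toReal)) := by
      refine ⟨1, ?_⟩
      rintro x ⟨T, rfl⟩
      have h1 : (P T.1).toReal ≤ 1 := by
        simpa using ENNReal.toReal_mono ENNReal.one_ne_top (prob_le_one (μ := P) (s := T.1))
      have h2 : 0 ≤ Real.exp ε * (Q T.1).toReal :=
        mul_nonneg (Real.exp_pos ε).le ENNReal.toReal_nonneg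
      simp only []
      linarith
    have h2 : (P S).toReal - Real.exp ε * (Q S).toReal ≤ 0 :=
      h ▸ le_ciSup hb (⟨S, hS⟩ : {S : Set Ω // MeasurableSet S})
    linarith
  have key2 : ∀ S : Set Ω, MeasurableSet S →
      ∫⁻ x in S, ENNReal.ofReal (f x) ∂μ ≤ ∫⁻ x in S, ENNReal.ofReal (Real.exp ε * g x) ∂μ := by
    intro S hS
    have h1 : P S = ∫⁻ x in S, ENNReal.ofReal (f x) ∂μ := by
      rw [hP, withDensity_apply _ hS]
    have h2 : Q S = ∫⁻ x in S, ENNReal.ofReal (g x) ∂μ := by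
      rw [hQ, withDensity_apply _ hS]
    have hPS : P S ≠ ⊤ := measure_ne_top _ _
    have hQS : Q S ≠ ⊤ := measure_ne_top _ _
    have hle : P S ≤ ENNReal.ofReal (Real.exp ε) * Q S := by
      rw [← ENNReal.ofReal_toReal hPS, ← ENNReal.ofReal_toReal hQS,
        ← ENNReal.ofReal_mul (Real.exp_pos ε).le]
      exact ENNReal.ofReal_le_ofReal (key S hS)
    calc ∫⁻ x in S, ENNReal.ofReal (f x) ∂μ = P S := h1.symm
      _ ≤ ENNReal.ofReal (Real.exp ε) * Q S := hle
      _ = ∫⁻ x in S, ENNReal.ofReal (Real.exp ε) * ENNReal.ofReal (g x) ∂μ := by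
          rw [h2, ← lintegral_const_mul _ hg.ennreal_ofReal]
      _ = ∫⁻ x in S, ENNReal.ofReal (Real.exp ε * g x) ∂μ := by
          refine lintegral_congr fun x => ?_
          rw [ENNReal.ofReal_mul (Real.exp_pos ε).le]
  have hae := ae_le_of_forall_setLIntegral_le_of_sigmaFinite hf.ennreal_ofReal
      (fun s hs _ => key2 s hs)
  filter_upwards [hae] with θ hθ
  exact (ENNReal.ofReal_le_ofReal_iff (mul_nonneg (Real.exp_pos ε).le (hg0 θ))).mp hθ

lemma chord_bound {p q r t : ℝ} (hp : 0 < p) (hpq : p < q) (hr : 1 ≤ r)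
    (h1 : p ≤ t) (h2 : t ≤ q) :
    t ^ r ≤ ((q ^ r - p ^ r) / (q - p)) * t
      + (p ^ r - ((q ^ r - p ^ r) / (q - p)) * p) := by
  have hd : 0 < q - p := sub_pos.mpr hpq
  have hdne : q - p ≠ 0 := ne_of_gt hd
  set lam := (q - t) / (q - p) with hlamdef
  set mu := (t - p) / (q - p) with hmudef
  have hlam : 0 ≤ lam := div_nonneg (by linarith) hd.le
  have hmu : 0 ≤ mu := div_nonneg (by linarith) hd.le
  have hsum : lam + mu = 1 := by
    rw [hlamdef, hmudef, ← add_div, div_eq_one_iff_eq hdne]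
    ring
  have ht : lam • p + mu • q = t := by
    rw [smul_eq_mul, smul_eq_mul, hlamdef, hmudef, div_mul_eq_mul_div, div_mul_eq_mul_div,
      ← add_div, div_eq_iff hdne]
    ring
  have hc := (convexOn_rpow hr).2 (Set.mem_Ici.mpr hp.le)
    (Set.mem_Ici.mpr (lt_trans hp hpq).le) hlam hmu hsum
  rw [ht, smul_eq_mul, smul_eq_mul] at hc
  have heq : lam * p ^ r + mu * q ^ r
      = ((q ^ r - p ^ r) / (q - p)) * t
        + (p ^ r - ((q ^ r - p ^ r) / (q - p)) * p) := by
    rw [hlamdef, hmudef]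
    field_simp
    ring
  linarith [hc, heq.le]

theorem pure_dp_renyi_bound {Ω : Type*} [MeasurableSpace Ω]
    (μ : Measure Ω) [SigmaFinite μ]
    (P Q : Measure Ω) [IsProbabilityMeasure P] [IsProbabilityMeasure Q]
    (f g : Ω → ℝ) (hf : Measurable f) (hg : Measurable g)
    (hf0 : 0 ≤ f) (hg0 : 0 ≤ g)
    (hP : P = μ.withDensity (fun θ => ENNReal.ofReal (f θ)))
    (hQ : Q = μ.withDensity (fun θ => ENNReal.ofReal (g θ)))
    (ε : ℝ) (hε : 0 ≤ ε)
    (hPQ : privProfile P Q ε = 0) (hQP : privProfile Q P ε = 0)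
    (r : ℝ) (hr : 1 < r) :
    (1 / (r - 1)) * Real.log (∫ θ, f θ ^ r * g θ ^ (1 - r) ∂μ)
      ≤ (1 / (r - 1)) * Real.log ((Real.exp ε / (Real.exp ε + 1)) * Real.exp (-r * ε)
          + (1 / (Real.exp ε + 1)) * Real.exp (r * ε)) := by
  have hr0 : (0:ℝ) < r := lt_trans one_pos hr
  have hfae : ∀ᵐ θ ∂μ, f θ ≤ Real.exp ε * g θ :=
    ae_le_of_profile μ P Q f g hf hg hg0 hP hQ ε hPQ
  have hgae : ∀ᵐ θ ∂μ, g θ ≤ Real.exp ε * f θ :=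
    ae_le_of_profile μ Q P g f hg hf hf0 hQ hP ε hQP
  have hfl1 : ∫⁻ θ, ENNReal.ofReal (f θ) ∂μ = 1 := by
    have h := measure_univ (μ := P)
    rwa [hP, withDensity_apply _ MeasurableSet.univ, Measure.restrict_univ] at h
  have hgl1 : ∫⁻ θ, ENNReal.ofReal (g θ) ∂μ = 1 := by
    have h := measure_univ (μ := Q)
    rwa [hQ, withDensity_apply _ MeasurableSet.univ, Measure.restrict_univ] at h
  have hfInt : Integrable f μ := by
    refine ⟨hf.aestronglyMeasurable, ?_⟩
    rw [hasFiniteIntegral_iff_ofReal (Filter.Eventually.of_forall hf0), hfl1]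
    exact ENNReal.one_lt_top
  have hgInt : Integrable g μ := by
    refine ⟨hg.aestronglyMeasurable, ?_⟩
    rw [hasFiniteIntegral_iff_ofReal (Filter.Eventually.of_forall hg0), hgl1]
    exact ENNReal.one_lt_top
  have hfI : ∫ θ, f θ ∂μ = 1 := by
    rw [integral_eq_lintegral_of_nonneg_ae (Filter.Eventually.of_forall hf0)
      hf.aestronglyMeasurable, hfl1]
    simp
  have hgI : ∫ θ, g θ ∂μ = 1 := by
    rw [integral_eq_lintegral_of_nonneg_ae (Filter.Eventually.of_forall hg0)
      hg.aestronglyMeasurable, hgl1]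
    simp
  have hI0 : 0 ≤ ∫ θ, f θ ^ r * g θ ^ (1 - r) ∂μ :=
    integral_nonneg fun θ => mul_nonneg (Real.rpow_nonneg (hf0 θ) r)
      (Real.rpow_nonneg (hg0 θ) _)
  rcases eq_or_lt_of_le hε with hε0 | hε0
  · -- case ε = 0
    subst hε0
    have hfg : f =ᵐ[μ] g := by
      filter_upwards [hfae, hgae] with θ h1 h2
      rw [Real.exp_zero, one_mul] at h1 h2
      exact le_antisymm h1 h2
    have hIeq : ∫ θ, f θ ^ r * g θ ^ (1 - r) ∂μ = ∫ θ, f θ ∂μ := by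
      refine integral_congr_ae ?_
      filter_upwards [hfg] with θ hθ
      rw [← hθ]
      rcases eq_or_lt_of_le (show (0:ℝ) ≤ f θ from hf0 θ) with h0 | h0
      · rw [← h0, Real.zero_rpow (by linarith : r ≠ 0), zero_mul]
      · rw [← Real.rpow_add h0, show r + (1 - r) = 1 by ring, Real.rpow_one]
    rw [hIeq, hfI]
    have h12 : Real.exp 0 / (Real.exp 0 + 1) * Real.exp (-r * 0)
        + 1 / (Real.exp 0 + 1) * Real.exp (r * 0) = 1 := by
      norm_num [Real.exp_zero]
    rw [h12, Real.log_one]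
  · -- case ε > 0
    set q' := Real.exp ε with hq'
    set p' := Real.exp (-ε) with hp'
    have hq1 : 1 < q' := Real.one_lt_exp_iff.mpr hε0
    have hq'0 : (0:ℝ) < q' := lt_trans one_pos hq1
    have hp0 : 0 < p' := Real.exp_pos _
    have hpq : p' < q' := by
      rw [hp', hq']
      exact Real.exp_lt_exp.mpr (by linarith)
    have hpq1 : p' * q' = 1 := by
      rw [hp', hq', ← Real.exp_add]
      simp
    have hp'q : p' = q'⁻¹ := by rw [hp', hq', Real.exp_neg]
    set m := (q' ^ r - p' ^ r) / (q' - p') with hm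
    set A := p' ^ r - m * p' with hA
    have hm0 : 0 ≤ m :=
      div_nonneg (sub_nonneg.mpr (Real.rpow_le_rpow hp0.le hpq.le hr0.le)) (by linarith)
    have hpt : ∀ᵐ θ ∂μ, f θ ^ r * g θ ^ (1 - r) ≤ m * f θ + A * g θ := by
      filter_upwards [hfae, hgae] with θ h1 h2
      rcases eq_or_lt_of_le (show (0:ℝ) ≤ g θ from hg0 θ) with hgz | hgz
      · have hfz : f θ = 0 := by
          rw [← hgz, mul_zero] at h1
          exact le_antisymm h1 (hf0 θ)
        rw [hfz, ← hgz, Real.zero_rpow (by linarith : r ≠ 0), zero_mul, mul_zero, mul_zero,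
          add_zero]
      · set t := f θ / g θ with htdef
        have ht1 : p' ≤ t := by
          rw [htdef, le_div_iff₀ hgz]
          nlinarith [mul_le_mul_of_nonneg_left h2 hp0.le]
        have ht2 : t ≤ q' := by
          rw [htdef, div_le_iff₀ hgz]
          exact h1
        have hc : t ^ r ≤ m * t + A := by
          rw [hA, hm]
          exact chord_bound hp0 hpq hr.le ht1 ht2
        have hkey : f θ ^ r * g θ ^ (1 - r) = t ^ r * g θ := by
          rw [htdef, Real.div_rpow (hf0 θ) (hg0 θ), Real.rpow_sub hgz, Real.rpow_one]
          field_simp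
        rw [hkey]
        have h3 := mul_le_mul_of_nonneg_right hc hgz.le
        calc t ^ r * g θ ≤ (m * t + A) * g θ := h3
          _ = m * f θ + A * g θ := by
              rw [htdef]
              field_simp
    have hrpow_meas : Measurable fun θ => f θ ^ r * g θ ^ (1 - r) := by
      have h1 : Measurable fun θ => f θ ^ r :=
        (Real.continuous_rpow_const hr0.le).measurable.comp hf
      have h2 : (fun θ => g θ ^ (1 - r)) = fun θ => g θ / g θ ^ r := by
        funext θ
        rcases eq_or_lt_of_le (show (0:ℝ) ≤ g θ from hg0 θ) with h | h
        · rw [← h, Real.zero_rpow (by linarith : (1:ℝ) - r ≠ 0),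
            Real.zero_rpow (by linarith : r ≠ 0), div_zero]
        · rw [Real.rpow_sub h, Real.rpow_one]
      refine h1.mul ?_
      rw [h2]
      exact hg.div ((Real.continuous_rpow_const hr0.le).measurable.comp hg)
    have hbound : Integrable (fun θ => m * f θ + |A| * g θ) μ :=
      (hfInt.const_mul m).add (hgInt.const_mul |A|)
    have hInt : Integrable (fun θ => f θ ^ r * g θ ^ (1 - r)) μ := by
      refine hbound.mono' hrpow_meas.aestronglyMeasurable ?_
      filter_upwards [hpt] with θ hθ
      rw [Real.norm_eq_abs, abs_of_nonneg (mul_nonneg (Real.rpow_nonneg (hf0 θ) r)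
        (Real.rpow_nonneg (hg0 θ) _))]
      have h4 : A * g θ ≤ |A| * g θ := mul_le_mul_of_nonneg_right (le_abs_self A) (hg0 θ)
      linarith
    have hIle : ∫ θ, f θ ^ r * g θ ^ (1 - r) ∂μ ≤ m + A := by
      have h1 : ∫ θ, (m * f θ + A * g θ) ∂μ = m + A := by
        rw [integral_add (hfInt.const_mul m) (hgInt.const_mul A), integral_const_mul,
          integral_const_mul, hfI, hgI, mul_one, mul_one]
      rw [← h1]
      exact integral_mono_ae hInt ((hfInt.const_mul m).add (hgInt.const_mul A)) hpt
    have hq'ne : q' ≠ 0 := ne_of_gt hq'0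
    have hd1 : q' - p' ≠ 0 := by linarith
    have hd2 : q' + 1 ≠ 0 := by linarith
    have hm2 : m * (q' - p') = q' ^ r - p' ^ r := by
      rw [hm]
      exact div_mul_cancel₀ _ hd1
    have hDXY : m + A = (q' * p' ^ r + q' ^ r) / (q' + 1) := by
      rw [eq_div_iff hd2]
      linear_combination (q' + 1) * hA + hm2 - m * hpq1
    have hXY : p' ^ r * q' ^ r = 1 := by
      rw [← Real.mul_rpow hp0.le hq'0.le, hpq1, Real.one_rpow]
    have hYq : q' ≤ q' ^ r := by
      calc q' = q' ^ (1:ℝ) := (Real.rpow_one q').symm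
        _ ≤ q' ^ r := Real.rpow_le_rpow_of_exponent_le hq1.le hr.le
    have hXp : p' ^ r ≤ p' := by
      calc p' ^ r ≤ p' ^ (1:ℝ) :=
            Real.rpow_le_rpow_of_exponent_ge hp0 (by nlinarith) hr.le
        _ = p' := Real.rpow_one p'
    have hD1 : 1 ≤ m + A := by
      rw [hDXY, le_div_iff₀ (by linarith : (0:ℝ) < q' + 1)]
      nlinarith [mul_nonneg (sub_nonneg.mpr hYq) (sub_nonneg.mpr
        (show q' * p' ^ r ≤ 1 by nlinarith))]
    have hD : m + A = q' / (q' + 1) * Real.exp (-r * ε) + 1 / (q' + 1) * Real.exp (r * ε) := by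
      have e1 : Real.exp (r * ε) = q' ^ r := by
        rw [hq', ← Real.exp_mul, mul_comm]
      have e2 : Real.exp (-r * ε) = p' ^ r := by
        rw [hp', ← Real.exp_mul]
        congr 1
        ring
      rw [e1, e2, hDXY]
      ring
    rw [hD] at hIle hD1
    have h1r : (0:ℝ) ≤ 1 / (r - 1) := div_nonneg zero_le_one (by linarith)
    refine mul_le_mul_of_nonneg_left ?_ h1r
    rcases eq_or_lt_of_le hI0 with h0 | h0
    · rw [← h0, Real.log_zero]
      exact Real.log_nonneg hD1
    · exact Real.log_le_log h0 hIle
end
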